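/- Fix a ≥ 2 and a constant r > a·H_a. If n = ⌊rk⌋, then the probability that a uniformly random string of length n over [a] is k-omni tends to 1 as k → ∞. -/

import Mathlib

open Finset Filter
open scoped Classical

namespace Omni12

noncomputable section

/-- next state of the coupon-collector round process -/
def nxt (a : ℕ) (A : Finset (Fin a)) (c : Fin a) : Finset (Fin a) :=
  if c ∈ A then A else if A.card + 1 = a then ∅ else insert c A

/-- number of completed rounds -/
def rounds (a : ℕ) : Finset (Fin a) → List (Fin a) → ℕ
  | _, [] => 0
  | A, c :: l => (if c ∉ A ∧ A.card + 1 = a then 1 else 0) + rounds a (nxt a A c) l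

/-- final state -/
def endst (a : ℕ) : Finset (Fin a) → List (Fin a) → Finset (Fin a)
  | A, [] => A
  | A, c :: l => endst a (nxt a A c) l

lemma rounds_split {a : ℕ} (l : List (Fin a)) (A : Finset (Fin a))
    (h : 1 ≤ rounds a A l) :
    ∃ l₁ l₂, l = l₁ ++ l₂ ∧ (∀ x, x ∉ A → x ∈ l₁) ∧
      rounds a A l - 1 ≤ rounds a ∅ l₂ := by
  induction l generalizing A with
  | nil => simp [rounds] at h
  | cons c l ih =>
    by_cases hc : c ∈ A
    · have hb : rounds a A (c :: l) = rounds a A l := by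
        simp [rounds, nxt, hc]
      rw [hb] at h ⊢
      obtain ⟨l₁, l₂, rfl, hmem, hle⟩ := ih A h
      exact ⟨c :: l₁, l₂, rfl, fun x hx => List.mem_cons_of_mem c (hmem x hx), hle⟩
    · by_cases hcard : A.card + 1 = a
      · refine ⟨[c], l, rfl, ?_, ?_⟩
        · intro x hx
          have hcompl : Aᶜ.card = 1 := by
            rw [Finset.card_compl]
            simp only [Fintype.card_fin]
            omega
          have hx' : x ∈ Aᶜ := Finset.mem_compl.mpr hx
          have hc' : c ∈ Aᶜ := Finset.mem_compl.mpr hc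
          have := Finset.card_le_one.mp (le_of_eq hcompl) x hx' c hc'
          simp [this]
        · have hb : rounds a A (c :: l) = 1 + rounds a ∅ l := by
            simp [rounds, nxt, hc, hcard]
          omega
      · have hb : rounds a A (c :: l) = rounds a (insert c A) l := by
          simp [rounds, nxt, hc, hcard]
        rw [hb] at h ⊢
        obtain ⟨l₁, l₂, rfl, hmem, hle⟩ := ih (insert c A) h
        refine ⟨c :: l₁, l₂, rfl, ?_, hle⟩
        intro x hx
        by_cases hxc : x = c
        · simp [hxc]
        · exact List.mem_cons_of_mem c (hmem x (by simp [hxc, hx]))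

lemma sublist_of_rounds {a : ℕ} (T l : List (Fin a))
    (h : T.length ≤ rounds a ∅ l) : T.Sublist l := by
  induction T generalizing l with
  | nil => exact List.nil_sublist l
  | cons t T ih =>
    have h1 : 1 ≤ rounds a ∅ l := le_trans (by simp) h
    obtain ⟨l₁, l₂, rfl, hmem, hle⟩ := rounds_split l ∅ h1
    have ht : t ∈ l₁ := hmem t (Finset.notMem_empty t)
    have hT : T.length ≤ rounds a ∅ l₂ := by
      simp only [List.length_cons] at h
      omega
    exact (List.singleton_sublist.mpr ht).append (ih l₂ hT)

/-- the eigen-weights -/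
def v (a : ℕ) (δ : ℝ) (s : ℕ) : ℝ :=
  ∏ i ∈ Finset.range s, (1 - (a : ℝ) * δ / ((a : ℝ) - i))

variable {a : ℕ} {δ : ℝ}

lemma v_zero : v a δ 0 = 1 := Finset.prod_range_zero _

lemma factor_bounds (hδ0 : 0 ≤ δ) (hδa : (a : ℝ) * δ ≤ 1/2) {i : ℕ} (hi : i < a) :
    1/2 ≤ 1 - (a : ℝ) * δ / ((a : ℝ) - i) ∧ 1 - (a : ℝ) * δ / ((a : ℝ) - i) ≤ 1 := by
  have h1 : (1 : ℝ) ≤ (a : ℝ) - i := by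
    have : (i : ℝ) + 1 ≤ a := by exact_mod_cast hi
    linarith
  have hnn : (0:ℝ) ≤ (a : ℝ) * δ := by positivity
  constructor
  · have := div_le_self hnn h1
    linarith
  · have : (0:ℝ) ≤ (a : ℝ) * δ / ((a : ℝ) - i) := by positivity
    linarith

lemma v_pos (hδ0 : 0 ≤ δ) (hδa : (a : ℝ) * δ ≤ 1/2) {s : ℕ} (hs : s ≤ a) :
    0 < v a δ s := by
  apply Finset.prod_pos
  intro i hi
  have := (factor_bounds hδ0 hδa (lt_of_lt_of_le (Finset.mem_range.mp hi) hs)).1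
  linarith

lemma v_le_one (hδ0 : 0 ≤ δ) (hδa : (a : ℝ) * δ ≤ 1/2) {s : ℕ} (hs : s ≤ a) :
    v a δ s ≤ 1 := by
  apply Finset.prod_le_one
  · intro i hi
    have := (factor_bounds hδ0 hδa (lt_of_lt_of_le (Finset.mem_range.mp hi) hs)).1
    linarith
  · intro i hi
    exact (factor_bounds hδ0 hδa (lt_of_lt_of_le (Finset.mem_range.mp hi) hs)).2

lemma v_a_le (hδ0 : 0 ≤ δ) (hδa : (a : ℝ) * δ ≤ 1/2) {s : ℕ} (hs : s ≤ a) :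
    v a δ a ≤ v a δ s := by
  have key : v a δ a = v a δ s * ∏ i ∈ Finset.Ico s a, (1 - (a : ℝ) * δ / ((a : ℝ) - i)) := by
    rw [v, v, Finset.range_eq_Ico]
    rw [Finset.range_eq_Ico]
    exact (Finset.prod_Ico_consecutive (fun i : ℕ => (1 - (a : ℝ) * δ / ((a : ℝ) - i))) (Nat.zero_le s) hs).symm
  rw [key]
  have hvs := v_pos hδ0 hδa hs
  have hple : ∏ i ∈ Finset.Ico s a, (1 - (a : ℝ) * δ / ((a : ℝ) - i)) ≤ 1 := by
    apply Finset.prod_le_one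
    · intro i hi
      have := (factor_bounds hδ0 hδa (Finset.mem_Ico.mp hi).2).1; linarith
    · intro i hi
      exact (factor_bounds hδ0 hδa (Finset.mem_Ico.mp hi).2).2
  nlinarith

lemma v_succ {s : ℕ} (hs : s < a) :
    v a δ (s + 1) = v a δ s * (1 - (a : ℝ) * δ / ((a : ℝ) - s)) :=
  Finset.prod_range_succ _ s

/-- the algebraic eigen-identity -/
lemma key_alg {s : ℕ} (hs : s < a) :
    (s : ℝ) * v a δ s + ((a : ℝ) - s) * v a δ (s + 1) = ((a : ℝ) * (1 - δ)) * v a δ s := by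
  have hne : ((a : ℝ) - s) ≠ 0 := by
    have : (s : ℝ) + 1 ≤ a := by exact_mod_cast hs
    linarith
  rw [v_succ hs]
  field_simp
  ring

lemma nxt_card_lt {A : Finset (Fin a)} (hA : A.card < a) (c : Fin a) :
    (nxt a A c).card < a := by
  rw [nxt]
  split_ifs with h1 h2
  · exact hA
  · simp only [Finset.card_empty]; omega
  · rw [Finset.card_insert_of_notMem h1]; omega

/-- one-step identity -/
lemma step_sum (hδ0 : 0 ≤ δ) (hδa : (a : ℝ) * δ ≤ 1/2)
    {A : Finset (Fin a)} (hA : A.card < a) :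
    ∑ c : Fin a, (v a δ a) ^ (if c ∉ A ∧ A.card + 1 = a then 1 else 0)
        * v a δ (nxt a A c).card
      = ((a : ℝ) * (1 - δ)) * v a δ A.card := by
  rw [← Finset.sum_add_sum_compl A]
  have hA' : ∑ c ∈ A, (v a δ a) ^ (if c ∉ A ∧ A.card + 1 = a then 1 else 0)
      * v a δ (nxt a A c).card = (A.card : ℝ) * v a δ A.card := by
    rw [Finset.sum_congr rfl (fun c hc => ?_), Finset.sum_const, nsmul_eq_mul]
    simp [nxt, hc]
  have hAc : ∑ c ∈ Aᶜ, (v a δ a) ^ (if c ∉ A ∧ A.card + 1 = a then 1 else 0)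
      * v a δ (nxt a A c).card = ((a : ℝ) - A.card) * v a δ (A.card + 1) := by
    have hcompl : (Aᶜ.card : ℝ) = (a : ℝ) - A.card := by
      rw [Finset.card_compl]
      simp only [Fintype.card_fin]
      have hle : A.card ≤ a := le_of_lt hA
      push_cast [Nat.cast_sub hle]
      ring
    rw [Finset.sum_congr rfl (fun c hc => ?_), Finset.sum_const, nsmul_eq_mul, hcompl]
    have hc' : c ∉ A := Finset.mem_compl.mp hc
    by_cases hcard : A.card + 1 = a
    · have hn : nxt a A c = ∅ := by simp [nxt, hc', hcard]
      rw [hn, if_pos ⟨hc', hcard⟩, pow_one, Finset.card_empty, v_zero, hcard, mul_one]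
    · have hn : nxt a A c = insert c A := by simp [nxt, hc', hcard]
      rw [hn, Finset.card_insert_of_notMem hc', if_neg (by tauto), pow_zero, one_mul]
  rw [hA', hAc]
  exact key_alg hA

lemma main_sum (hδ0 : 0 ≤ δ) (hδa : (a : ℝ) * δ ≤ 1/2) :
    ∀ (n : ℕ) (A : Finset (Fin a)), A.card < a →
    ∑ S : Fin n → Fin a,
        (v a δ a) ^ (rounds a A (List.ofFn S)) * v a δ (endst a A (List.ofFn S)).card
      = ((a : ℝ) * (1 - δ)) ^ n * v a δ A.card := by
  intro n
  induction n with
  | zero =>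
    intro A hA
    simp [List.ofFn_zero, rounds, endst]
  | succ n ih =>
    intro A hA
    rw [← Equiv.sum_comp (Fin.consEquiv fun _ : Fin (n+1) => Fin a)]
    rw [Fintype.sum_prod_type]
    have hterm : ∀ (c : Fin a) (S' : Fin n → Fin a),
        (v a δ a) ^ (rounds a A (List.ofFn ((Fin.consEquiv fun _ : Fin (n+1) => Fin a) (c, S'))))
          * v a δ (endst a A (List.ofFn ((Fin.consEquiv fun _ : Fin (n+1) => Fin a) (c, S')))).card
        = (v a δ a) ^ (if c ∉ A ∧ A.card + 1 = a then 1 else 0) *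
            ((v a δ a) ^ (rounds a (nxt a A c) (List.ofFn S'))
              * v a δ (endst a (nxt a A c) (List.ofFn S')).card) := by
      intro c S'
      have hofn : List.ofFn ((Fin.consEquiv fun _ : Fin (n+1) => Fin a) (c, S'))
          = c :: List.ofFn S' := by
        simp [Fin.consEquiv, List.ofFn_cons]
      rw [hofn]
      show (v a δ a) ^ (rounds a A (c :: List.ofFn S'))
          * v a δ (endst a A (c :: List.ofFn S')).card = _
      rw [rounds, endst, pow_add]
      ring
    have h1 : ∑ c : Fin a, ∑ S' : Fin n → Fin a,
        (v a δ a) ^ (rounds a A (List.ofFn ((Fin.consEquiv fun _ : Fin (n+1) => Fin a) (c, S'))))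
          * v a δ (endst a A (List.ofFn ((Fin.consEquiv fun _ : Fin (n+1) => Fin a) (c, S')))).card
        = ∑ c : Fin a, (v a δ a) ^ (if c ∉ A ∧ A.card + 1 = a then 1 else 0) *
            (((a : ℝ) * (1 - δ)) ^ n * v a δ (nxt a A c).card) := by
      refine Finset.sum_congr rfl fun c _ => ?_
      rw [Finset.sum_congr rfl fun S' _ => hterm c S', ← Finset.mul_sum,
        ih (nxt a A c) (nxt_card_lt hA c)]
    rw [h1]
    have h2 : ∑ c : Fin a, (v a δ a) ^ (if c ∉ A ∧ A.card + 1 = a then 1 else 0) *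
        (((a : ℝ) * (1 - δ)) ^ n * v a δ (nxt a A c).card)
        = ((a : ℝ) * (1 - δ)) ^ n * ∑ c : Fin a,
            (v a δ a) ^ (if c ∉ A ∧ A.card + 1 = a then 1 else 0) * v a δ (nxt a A c).card := by
      rw [Finset.mul_sum]; exact Finset.sum_congr rfl fun c _ => by ring
    rw [h2, step_sum hδ0 hδa hA, pow_succ]
    ring

lemma sum_reindex (a : ℕ) :
    ∑ i ∈ Finset.range a, (1:ℝ)/((a:ℝ) - i) = ∑ j ∈ Finset.Icc 1 a, 1/(j:ℝ) := by
  rw [show Finset.Icc 1 a = (Finset.range a).image (fun i => a - i) by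
    ext j
    simp only [Finset.mem_Icc, Finset.mem_image, Finset.mem_range]
    constructor
    · rintro ⟨h1, h2⟩; exact ⟨a - j, by omega, by omega⟩
    · rintro ⟨i, hi, rfl⟩; omega]
  rw [Finset.sum_image (by intro x hx y hy h; dsimp only at h; simp at hx hy; omega)]
  refine Finset.sum_congr rfl fun i hi => ?_
  have hia : i < a := Finset.mem_range.mp hi
  rw [Nat.cast_sub hia.le]

lemma prod_one_sub_ge (s : Finset ℕ) (f : ℕ → ℝ) (h0 : ∀ i ∈ s, 0 ≤ f i)
    (h1 : ∀ i ∈ s, f i ≤ 1) :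
    1 - ∑ i ∈ s, f i ≤ ∏ i ∈ s, (1 - f i) := by
  classical
  induction s using Finset.induction_on with
  | empty => simp
  | @insert x s' hx ih =>
    rw [Finset.sum_insert hx, Finset.prod_insert hx]
    have hIH := ih (fun i hi => h0 i (Finset.mem_insert_of_mem hi))
      (fun i hi => h1 i (Finset.mem_insert_of_mem hi))
    have hfx0 := h0 x (Finset.mem_insert_self x s')
    have hfx1 := h1 x (Finset.mem_insert_self x s')
    have hsum0 : 0 ≤ ∑ i ∈ s', f i :=
      Finset.sum_nonneg (fun i hi => h0 i (Finset.mem_insert_of_mem hi))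
    nlinarith

/-- choice of δ -/
lemma exists_delta (a : ℕ) (ha : 2 ≤ a) (r : ℝ)
    (hr : (a : ℝ) * ∑ i ∈ Finset.Icc 1 a, (1 : ℝ) / i < r) :
    ∃ δ : ℝ, 0 < δ ∧ (a : ℝ) * δ ≤ 1/2 ∧ (1 - δ) ^ r < v a δ a := by
  set μ := (a : ℝ) * ∑ i ∈ Finset.Icc 1 a, (1 : ℝ) / i with hμdef
  have hsum1 : (1:ℝ) ≤ ∑ i ∈ Finset.Icc 1 a, (1 : ℝ) / i := by
    have h1mem : 1 ∈ Finset.Icc 1 a := by simp; omega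
    have := Finset.single_le_sum (f := fun i : ℕ => (1:ℝ)/i)
      (fun i _ => by positivity) h1mem
    simpa using this
  have hμ2 : (2:ℝ) ≤ μ := by
    have ha' : (2:ℝ) ≤ a := by exact_mod_cast ha
    nlinarith
  have hr0 : (0:ℝ) < r := by linarith
  refine ⟨min (1/(2*(a:ℝ))) ((r - μ)/(2*r^2)), ?_, ?_, ?_⟩
  · apply lt_min
    · positivity
    · have : 0 < r - μ := by linarith
      positivity
  · have h := min_le_left (1/(2*(a:ℝ))) ((r - μ)/(2*r^2))
    have ha0 : (0:ℝ) < a := by positivity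
    calc (a:ℝ) * min (1/(2*(a:ℝ))) ((r - μ)/(2*r^2)) ≤ (a:ℝ) * (1/(2*(a:ℝ))) := by
          exact mul_le_mul_of_nonneg_left h ha0.le
      _ = 1/2 := by field_simp
  · set δ := min (1/(2*(a:ℝ))) ((r - μ)/(2*r^2)) with hδdef
    have hδ0 : 0 < δ := by
      apply lt_min
      · positivity
      · have : 0 < r - μ := by linarith
        positivity
    have hδa : (a:ℝ) * δ ≤ 1/2 := by
      have h := min_le_left (1/(2*(a:ℝ))) ((r - μ)/(2*r^2))
      have ha0 : (0:ℝ) < a := by positivity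
      calc (a:ℝ) * δ ≤ (a:ℝ) * (1/(2*(a:ℝ))) := mul_le_mul_of_nonneg_left h ha0.le
        _ = 1/2 := by field_simp
    have hδr : δ ≤ (r - μ)/(2*r^2) := min_le_right _ _
    have hδ1 : δ ≤ 1/4 := by
      have ha2 : (2:ℝ) ≤ a := by exact_mod_cast ha
      have := hδa
      nlinarith
    have h1 : (1 - δ : ℝ) ≤ Real.exp (-δ) := by
      have := Real.add_one_le_exp (-δ); linarith
    have h2 : (1 - δ : ℝ) ^ r ≤ Real.exp (-δ) ^ r :=
      Real.rpow_le_rpow (by linarith) h1 hr0.le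
    have h3 : Real.exp (-δ) ^ r = Real.exp (-(δ*r)) := by
      rw [← Real.exp_mul]; ring_nf
    have h4 : Real.exp (-(δ*r)) ≤ 1/(1 + δ*r) := by
      have hx : 0 < 1 + δ*r := by positivity
      have he : 1 + δ*r ≤ Real.exp (δ*r) := by
        have := Real.add_one_le_exp (δ*r); linarith
      rw [Real.exp_neg]
      rw [one_div]
      exact inv_anti₀ hx he
    have h5 : 1/(1 + δ*r) ≤ 1 - δ*r + (δ*r)^2 := by
      rw [div_le_iff₀ (by positivity)]
      nlinarith [sq_nonneg (δ*r), mul_pos hδ0 hr0]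
    have hβge : 1 - μ * δ ≤ v a δ a := by
      have hsum : ∑ i ∈ Finset.range a, (a:ℝ) * δ / ((a:ℝ) - i) = μ * δ := by
        have : ∀ i ∈ Finset.range a, (a:ℝ) * δ / ((a:ℝ) - i)
            = ((a:ℝ) * δ) * (1/((a:ℝ) - i)) := by
          intro i hi; ring
        rw [Finset.sum_congr rfl this, ← Finset.mul_sum, sum_reindex a, hμdef]
        ring
      have := prod_one_sub_ge (Finset.range a) (fun i => (a:ℝ) * δ / ((a:ℝ) - i))
        (fun i hi => ?_) (fun i hi => ?_)
      · rw [hsum] at this; exact this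
      · have hia : i < a := Finset.mem_range.mp hi
        have h1 : (1 : ℝ) ≤ (a : ℝ) - i := by
          have : (i : ℝ) + 1 ≤ a := by exact_mod_cast hia
          linarith
        positivity
      · have hia : i < a := Finset.mem_range.mp hi
        have h1 : (1 : ℝ) ≤ (a : ℝ) - i := by
          have : (i : ℝ) + 1 ≤ a := by exact_mod_cast hia
          linarith
        have hnn : (0:ℝ) ≤ (a : ℝ) * δ := by positivity
        have := div_le_self hnn h1
        linarith
    have hkey : 1 - δ*r + (δ*r)^2 < 1 - μ * δ := by
      have hr2 : r^2 * δ ≤ (r - μ)/2 := by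
        have : 2*r^2 * δ ≤ r - μ := by
          have h2r2 : (0:ℝ) < 2*r^2 := by positivity
          calc 2*r^2 * δ ≤ 2*r^2 * ((r - μ)/(2*r^2)) := by
                exact mul_le_mul_of_nonneg_left hδr h2r2.le
            _ = r - μ := by field_simp
        linarith
      nlinarith
    calc (1 - δ : ℝ) ^ r ≤ Real.exp (-δ) ^ r := h2
      _ = Real.exp (-(δ*r)) := h3
      _ ≤ 1/(1 + δ*r) := h4
      _ ≤ 1 - δ*r + (δ*r)^2 := h5
      _ < 1 - μ * δ := hkey
      _ ≤ v a δ a := hβge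

end

end Omni12

/-- For fixed `a ≥ 2` and a constant `r > a H_a`, with `n = ⌊r k⌋`, the probability that a
uniformly random string of length `n` over `Fin a` is `k`-omni tends to `1` as `k → ∞`. -/
theorem stmt_12 (a : ℕ) (ha : 2 ≤ a) (r : ℝ)
    (hr : (a : ℝ) * ∑ i ∈ Finset.Icc 1 a, (1 : ℝ) / i < r) :
    Tendsto (fun k : ℕ =>
        ((Finset.univ.filter (fun S : Fin ⌊r * k⌋₊ → Fin a =>
            ∀ T : List (Fin a), T.length = k → T.Sublist (List.ofFn S))).card : ℝ)
          / (a : ℝ) ^ (⌊r * k⌋₊))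
      atTop (nhds 1) := by
  classical
  obtain ⟨δ, hδ0, hδa, hβlt⟩ := Omni12.exists_delta a ha r hr
  set β := Omni12.v a δ a with hβdef
  have h0a : 0 < a := by omega
  have hβpos : 0 < β := Omni12.v_pos hδ0.le hδa le_rfl
  have hβ1 : β ≤ 1 := Omni12.v_le_one hδ0.le hδa le_rfl
  have hδ14 : δ ≤ 1/4 := by
    have ha2 : (2:ℝ) ≤ a := by exact_mod_cast ha
    nlinarith
  have hγ0 : (0:ℝ) < 1 - δ := by linarith
  have hγ1 : (1:ℝ) - δ ≤ 1 := by linarith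
  set q := (1 - δ) ^ r / β with hqdef
  have hq0 : 0 ≤ q := div_nonneg (Real.rpow_nonneg hγ0.le r) hβpos.le
  have hq1 : q < 1 := (div_lt_one hβpos).mpr hβlt
  have key : ∀ k : ℕ,
      1 - (1 - δ)⁻¹ * q ^ k ≤
        ((Finset.univ.filter (fun S : Fin ⌊r * k⌋₊ → Fin a =>
            ∀ T : List (Fin a), T.length = k → T.Sublist (List.ofFn S))).card : ℝ)
          / (a : ℝ) ^ (⌊r * k⌋₊) ∧
      ((Finset.univ.filter (fun S : Fin ⌊r * k⌋₊ → Fin a =>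
            ∀ T : List (Fin a), T.length = k → T.Sublist (List.ofFn S))).card : ℝ)
          / (a : ℝ) ^ (⌊r * k⌋₊) ≤ 1 := by
    intro k
    set n := ⌊r * k⌋₊ with hndef
    set Good := Finset.univ.filter (fun S : Fin n → Fin a =>
      ∀ T : List (Fin a), T.length = k → T.Sublist (List.ofFn S)) with hGood
    set Bad := Finset.univ.filter (fun S : Fin n → Fin a =>
      Omni12.rounds a ∅ (List.ofFn S) < k) with hBad
    have hcardU : (Finset.univ : Finset (Fin n → Fin a)).card = a ^ n := by
      rw [Finset.card_univ, Fintype.card_fun, Fintype.card_fin, Fintype.card_fin]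
    have hapow : (0:ℝ) < (a:ℝ) ^ n := by positivity
    -- the supermartingale bound on Bad
    have hsum := Omni12.main_sum hδ0.le hδa n ∅ (by simpa using h0a)
    rw [Finset.card_empty, Omni12.v_zero, mul_one] at hsum
    have hterm : ∀ S ∈ Bad, β ^ k ≤
        β ^ (Omni12.rounds a ∅ (List.ofFn S))
          * Omni12.v a δ (Omni12.endst a ∅ (List.ofFn S)).card := by
      intro S hS
      have hSk : Omni12.rounds a ∅ (List.ofFn S) < k := (Finset.mem_filter.mp hS).2
      have hcard : (Omni12.endst a ∅ (List.ofFn S)).card ≤ a := by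
        have := Finset.card_le_univ (Omni12.endst a ∅ (List.ofFn S))
        simpa using this
      have hv : β ≤ Omni12.v a δ (Omni12.endst a ∅ (List.ofFn S)).card :=
        Omni12.v_a_le hδ0.le hδa hcard
      calc β ^ k ≤ β ^ (Omni12.rounds a ∅ (List.ofFn S) + 1) :=
            pow_le_pow_of_le_one hβpos.le hβ1 (by omega)
        _ = β ^ (Omni12.rounds a ∅ (List.ofFn S)) * β := pow_succ β _
        _ ≤ _ := by
            have hnn : (0:ℝ) ≤ β ^ (Omni12.rounds a ∅ (List.ofFn S)) :=
              pow_nonneg hβpos.le _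
            exact mul_le_mul_of_nonneg_left hv hnn
    have hBadBound : (Bad.card : ℝ) * β ^ k ≤ ((a : ℝ) * (1 - δ)) ^ n := by
      have h1 : (Bad.card : ℝ) * β ^ k ≤ ∑ S ∈ Bad,
          β ^ (Omni12.rounds a ∅ (List.ofFn S))
            * Omni12.v a δ (Omni12.endst a ∅ (List.ofFn S)).card := by
        have := Finset.card_nsmul_le_sum Bad _ (β ^ k) hterm
        simpa [nsmul_eq_mul] using this
      have h2 : ∑ S ∈ Bad,
          β ^ (Omni12.rounds a ∅ (List.ofFn S))
            * Omni12.v a δ (Omni12.endst a ∅ (List.ofFn S)).card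
          ≤ ∑ S : Fin n → Fin a,
          β ^ (Omni12.rounds a ∅ (List.ofFn S))
            * Omni12.v a δ (Omni12.endst a ∅ (List.ofFn S)).card := by
        apply Finset.sum_le_sum_of_subset_of_nonneg (Finset.subset_univ Bad)
        intro S _ _
        have hcard : (Omni12.endst a ∅ (List.ofFn S)).card ≤ a := by
          have := Finset.card_le_univ (Omni12.endst a ∅ (List.ofFn S))
          simpa using this
        have := Omni12.v_pos hδ0.le hδa hcard
        positivity
      calc (Bad.card : ℝ) * β ^ k ≤ _ := h1
        _ ≤ _ := h2
        _ = ((a : ℝ) * (1 - δ)) ^ n := hsum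
    -- Good is at least the complement of Bad
    have hGoodGe : (a : ℝ) ^ n - Bad.card ≤ Good.card := by
      have hsub : Finset.univ.filter (fun S : Fin n → Fin a =>
          k ≤ Omni12.rounds a ∅ (List.ofFn S)) ⊆ Good := by
        intro S hS
        rw [Finset.mem_filter] at hS ⊢
        refine ⟨hS.1, fun T hT => ?_⟩
        exact Omni12.sublist_of_rounds T (List.ofFn S) (hT ▸ hS.2)
      have hsplit : (Finset.univ.filter (fun S : Fin n → Fin a =>
          k ≤ Omni12.rounds a ∅ (List.ofFn S))).card + Bad.card = a ^ n := by
        rw [hBad]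
        have : (Finset.univ.filter (fun S : Fin n → Fin a =>
            Omni12.rounds a ∅ (List.ofFn S) < k))
            = Finset.univ.filter (fun S : Fin n → Fin a =>
              ¬ k ≤ Omni12.rounds a ∅ (List.ofFn S)) := by
          apply Finset.filter_congr
          intro S _
          simp [not_le]
        rw [this, Finset.card_filter_add_card_filter_not, hcardU]
      have hle := Finset.card_le_card hsub
      have : ((Finset.univ.filter (fun S : Fin n → Fin a =>
          k ≤ Omni12.rounds a ∅ (List.ofFn S))).card : ℝ) + Bad.card = (a:ℝ) ^ n := by
        exact_mod_cast congrArg (Nat.cast : ℕ → ℝ) hsplit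
      have hle' : ((Finset.univ.filter (fun S : Fin n → Fin a =>
          k ≤ Omni12.rounds a ∅ (List.ofFn S))).card : ℝ) ≤ Good.card := by
        exact_mod_cast hle
      linarith
    -- exponent comparison
    have hpow : ((1:ℝ) - δ) ^ n * (1 - δ) ≤ ((1 - δ) ^ r) ^ k := by
      have hfloor : r * k < (n : ℝ) + 1 := by
        have := Nat.lt_floor_add_one (r * k)
        exact_mod_cast this
      have hrk : r * (k:ℝ) ≤ ((n + 1 : ℕ) : ℝ) := by push_cast; linarith
      have h1 : ((1:ℝ) - δ) ^ ((n + 1 : ℕ) : ℝ) ≤ (1 - δ) ^ (r * (k:ℝ)) :=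
        Real.rpow_le_rpow_of_exponent_ge hγ0 hγ1 hrk
      have h2 : ((1:ℝ) - δ) ^ ((n + 1 : ℕ) : ℝ) = (1 - δ) ^ n * (1 - δ) := by
        rw [Real.rpow_natCast, pow_succ]
      have h3 : ((1:ℝ) - δ) ^ (r * (k:ℝ)) = ((1 - δ) ^ r) ^ k := by
        rw [Real.rpow_mul hγ0.le, Real.rpow_natCast]
      rw [← h2, ← h3]
      exact h1
    -- Bad probability bound
    have hBadProb : (Bad.card : ℝ) ≤ (a : ℝ) ^ n * ((1 - δ)⁻¹ * q ^ k) := by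
      have hβk : (0:ℝ) < β ^ k := pow_pos hβpos k
      have h1 : (Bad.card : ℝ) ≤ ((a : ℝ) * (1 - δ)) ^ n / β ^ k := by
        rw [le_div_iff₀ hβk]
        exact hBadBound
      have h2 : ((a : ℝ) * (1 - δ)) ^ n / β ^ k
          ≤ (a : ℝ) ^ n * ((1 - δ)⁻¹ * q ^ k) := by
        rw [mul_pow, hqdef, div_pow, div_le_iff₀ hβk]
        have expand : (a:ℝ) ^ n * ((1 - δ)⁻¹ * (((1 - δ) ^ r) ^ k / β ^ k)) * β ^ k
            = (a:ℝ) ^ n * ((1 - δ)⁻¹ * ((1 - δ) ^ r) ^ k) := by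
          field_simp
        rw [expand]
        have h3 : ((1:ℝ) - δ) ^ n ≤ (1 - δ)⁻¹ * ((1 - δ) ^ r) ^ k := by
          rw [← mul_le_mul_iff_right₀ hγ0, ← mul_assoc, mul_inv_cancel₀ (ne_of_gt hγ0), one_mul,
            mul_comm]
          exact hpow
        calc (a:ℝ) ^ n * (1 - δ) ^ n ≤ (a:ℝ) ^ n * ((1 - δ)⁻¹ * ((1 - δ) ^ r) ^ k) := by
              exact mul_le_mul_of_nonneg_left h3 (by positivity)
          _ = _ := rfl
      linarith
    constructor
    · rw [le_div_iff₀ hapow]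
      have : ((a:ℝ) ^ n - (a : ℝ) ^ n * ((1 - δ)⁻¹ * q ^ k)) ≤ Good.card := by
        linarith
      nlinarith
    · rw [div_le_one hapow]
      have := Finset.card_filter_le (Finset.univ : Finset (Fin n → Fin a))
        (fun S => ∀ T : List (Fin a), T.length = k → T.Sublist (List.ofFn S))
      have h2 : (Good.card : ℕ) ≤ a ^ n := by
        rw [hGood]; exact le_trans this (le_of_eq hcardU)
      exact_mod_cast h2
  have hlim : Tendsto (fun k : ℕ => 1 - (1 - δ)⁻¹ * q ^ k) atTop (nhds 1) := by
    have h1 := tendsto_pow_atTop_nhds_zero_of_lt_one hq0 hq1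
    have h2 := h1.const_mul ((1 - δ)⁻¹)
    have h3 := h2.const_sub 1
    simpa using h3
  exact tendsto_of_tendsto_of_tendsto_of_le_of_le hlim tendsto_const_nhds
    (fun k => (key k).1) (fun k => (key k).2)
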